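/- For every n ≥ 1, every n×n complex unitary matrix U is a finite product of matrices of the following two kinds: (i) phase shifter matrices D_{j,φ}, equal to the identity except that the (j, j) diagonal entry is e^{iφ}, for some index j and some φ ∈ ℝ; and (ii) beam splitter matrices S_{j,θ}, equal to the identity except that the 2×2 block on the adjacent rows and columns j, j+1 equals [[cos θ, i·sin θ], [i·sin θ, cos θ]], for some index j with j+1 ≤ n and some θ ∈ ℝ. (This is the universality of LOpp-circuits for U(n) at the level of single-photon semantics, used in the existence part of the triangular normal form.) -/

import Mathlib

open Complex Real

/-- Phase shifter matrix: identity except that the `(j, j)` entry is `e^{iφ}`. -/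
noncomputable def psMatrix (n : ℕ) (j : Fin n) (φ : ℝ) : Matrix (Fin n) (Fin n) ℂ :=
  Matrix.diagonal fun i => if i = j then Complex.exp (Complex.I * φ) else 1

/-- Beam splitter matrix on adjacent wires `j` and `j+1` (0-indexed): identity except for
the 2×2 block `[[cos θ, i sin θ], [i sin θ, cos θ]]` on rows and columns `j`, `j+1`. -/
noncomputable def bsMatrix (n : ℕ) (j : ℕ) (θ : ℝ) : Matrix (Fin n) (Fin n) ℂ :=
  fun i i' =>
    if ((i : ℕ) = j ∧ (i' : ℕ) = j) ∨ ((i : ℕ) = j + 1 ∧ (i' : ℕ) = j + 1) then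
      (Real.cos θ : ℂ)
    else if ((i : ℕ) = j ∧ (i' : ℕ) = j + 1) ∨ ((i : ℕ) = j + 1 ∧ (i' : ℕ) = j) then
      Complex.I * Real.sin θ
    else if i = i' then 1 else 0

def IsGen (n : ℕ) (M : Matrix (Fin n) (Fin n) ℂ) : Prop :=
  (∃ (j : Fin n) (φ : ℝ), M = psMatrix n j φ) ∨
    (∃ (j : ℕ) (θ : ℝ), j + 1 < n ∧ M = bsMatrix n j θ)

lemma ps_mul_ps (n : ℕ) (j : Fin n) (φ ψ : ℝ) :
    psMatrix n j φ * psMatrix n j ψ = psMatrix n j (φ + ψ) := by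
  unfold psMatrix
  rw [Matrix.diagonal_mul_diagonal]
  ext i i'
  simp only [Matrix.diagonal_apply]
  split_ifs <;> simp [← Complex.exp_add] <;> ring_nf

lemma ps_mul_ps_neg (n : ℕ) (j : Fin n) (φ : ℝ) :
    psMatrix n j φ * psMatrix n j (-φ) = 1 := by
  rw [ps_mul_ps]
  ext i i'
  simp only [psMatrix, Matrix.diagonal_apply, Matrix.one_apply]
  split_ifs <;> simp

lemma star_ps (n : ℕ) (j : Fin n) (φ : ℝ) :
    star (psMatrix n j φ) = psMatrix n j (-φ) := by
  unfold psMatrix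
  rw [Matrix.star_eq_conjTranspose, Matrix.diagonal_conjTranspose]
  apply congrArg Matrix.diagonal
  funext i
  rw [Pi.star_apply]
  split_ifs <;> simp [← Complex.exp_conj, Complex.conj_I]

lemma star_bs (n : ℕ) (j : ℕ) (θ : ℝ) :
    star (bsMatrix n j θ) = bsMatrix n j (-θ) := by
  ext i i'
  simp only [Matrix.star_apply, bsMatrix]
  have h1 : ((i':ℕ) = j ∧ (i:ℕ) = j ∨ (i':ℕ) = j + 1 ∧ (i:ℕ) = j + 1) ↔
      ((i:ℕ) = j ∧ (i':ℕ) = j ∨ (i:ℕ) = j + 1 ∧ (i':ℕ) = j + 1) := by tauto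
  have h2 : ((i':ℕ) = j ∧ (i:ℕ) = j + 1 ∨ (i':ℕ) = j + 1 ∧ (i:ℕ) = j) ↔
      ((i:ℕ) = j ∧ (i':ℕ) = j + 1 ∨ (i:ℕ) = j + 1 ∧ (i':ℕ) = j) := by tauto
  have h3 : (i' = i) ↔ (i = i') := eq_comm
  simp only [h1, h2, h3]
  split_ifs <;> simp [Complex.ext_iff]

lemma bs_mulVec (n j : ℕ) (hj : j + 1 < n) (θ : ℝ) (v : Fin n → ℂ) (i : Fin n) :
    (bsMatrix n j θ).mulVec v i =
      if (i : ℕ) = j then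
        (Real.cos θ : ℂ) * v ⟨j, Nat.lt_of_succ_lt hj⟩ + Complex.I * Real.sin θ * v ⟨j+1, hj⟩
      else if (i : ℕ) = j + 1 then
        Complex.I * Real.sin θ * v ⟨j, Nat.lt_of_succ_lt hj⟩ + (Real.cos θ : ℂ) * v ⟨j+1, hj⟩
      else v i := by
  have hne : (⟨j, Nat.lt_of_succ_lt hj⟩ : Fin n) ≠ ⟨j+1, hj⟩ := by
    simp [Fin.ext_iff]
  rw [Matrix.mulVec, dotProduct]
  by_cases h1 : (i : ℕ) = j
  · rw [Fintype.sum_eq_add (⟨j, Nat.lt_of_succ_lt hj⟩ : Fin n) ⟨j+1, hj⟩ hne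
      (fun x hx => by
        have hxj : (x : ℕ) ≠ j := fun h => hx.1 (Fin.ext h)
        have hxj1 : (x : ℕ) ≠ j + 1 := fun h => hx.2 (Fin.ext h)
        have : i ≠ x := fun h => hxj (h ▸ h1)
        simp [bsMatrix, hxj, hxj1, h1, this])]
    simp [bsMatrix, h1]
  · by_cases h2 : (i : ℕ) = j + 1
    · rw [Fintype.sum_eq_add (⟨j, Nat.lt_of_succ_lt hj⟩ : Fin n) ⟨j+1, hj⟩ hne
        (fun x hx => by
          have hxj : (x : ℕ) ≠ j := fun h => hx.1 (Fin.ext h)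
          have hxj1 : (x : ℕ) ≠ j + 1 := fun h => hx.2 (Fin.ext h)
          have : i ≠ x := fun h => hxj1 (h ▸ h2)
          simp [bsMatrix, hxj, hxj1, h1, h2, this])]
      simp [bsMatrix, h1, h2]
    · rw [Fintype.sum_eq_single i
        (fun x hx => by
          have : ¬ (i = x) := fun h => hx h.symm
          simp [bsMatrix, h1, h2, this])]
      simp [bsMatrix, h1, h2]

lemma bs_bs_neg_mulVec (n j : ℕ) (hj : j + 1 < n) (θ : ℝ) (v : Fin n → ℂ) :
    (bsMatrix n j θ).mulVec ((bsMatrix n j (-θ)).mulVec v) = v := by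
  have pyth : Complex.cos (θ:ℂ)^2 + Complex.sin (θ:ℂ)^2 = 1 := by
    rw [add_comm]; exact Complex.sin_sq_add_cos_sq _
  funext i
  rw [bs_mulVec n j hj]
  by_cases h1 : (i : ℕ) = j
  · rw [if_pos h1, bs_mulVec n j hj, bs_mulVec n j hj]
    simp only [Nat.succ_ne_self, if_pos rfl, if_neg (by omega : ¬ j + 1 = j), if_pos rfl]
    have : i = ⟨j, Nat.lt_of_succ_lt hj⟩ := Fin.ext h1
    rw [this]
    push_cast [Real.cos_neg, Real.sin_neg]
    linear_combination (v ⟨j, Nat.lt_of_succ_lt hj⟩) * pyth -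
      (Complex.sin (θ:ℂ))^2 * (v ⟨j, Nat.lt_of_succ_lt hj⟩) * Complex.I_sq
  · by_cases h2 : (i : ℕ) = j + 1
    · rw [if_neg h1, if_pos h2, bs_mulVec n j hj, bs_mulVec n j hj]
      simp only [Nat.succ_ne_self, if_pos rfl, if_neg (by omega : ¬ j + 1 = j), if_pos rfl]
      have : i = ⟨j + 1, hj⟩ := Fin.ext h2
      rw [this]
      push_cast [Real.cos_neg, Real.sin_neg]
      linear_combination (v ⟨j+1, hj⟩) * pyth -
        (Complex.sin (θ:ℂ))^2 * (v ⟨j+1, hj⟩) * Complex.I_sq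
    · rw [if_neg h1, if_neg h2, bs_mulVec n j hj, if_neg h1, if_neg h2]

lemma bs_mul_bs_neg (n j : ℕ) (hj : j + 1 < n) (θ : ℝ) :
    bsMatrix n j θ * bsMatrix n j (-θ) = 1 := by
  ext i k
  have h := congrFun (by
    rw [← Matrix.mulVec_mulVec, bs_bs_neg_mulVec n j hj θ (Pi.single k 1)] :
    (bsMatrix n j θ * bsMatrix n j (-θ)).mulVec (Pi.single k 1) = Pi.single k 1) i
  simpa [Matrix.mulVec_single, Matrix.one_apply, Pi.single_apply] using h

lemma ps_mulVec (n : ℕ) (j : Fin n) (φ : ℝ) (v : Fin n → ℂ) (i : Fin n) :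
    (psMatrix n j φ).mulVec v i =
      (if i = j then Complex.exp (Complex.I * φ) else 1) * v i := by
  rw [psMatrix, Matrix.mulVec_diagonal]

lemma gen_unitary {n : ℕ} {M : Matrix (Fin n) (Fin n) ℂ} (h : IsGen n M) :
    M ∈ unitary (Matrix (Fin n) (Fin n) ℂ) := by
  rw [Unitary.mem_iff]
  rcases h with ⟨j, φ, rfl⟩ | ⟨j, θ, hj, rfl⟩
  · constructor
    · rw [star_ps]
      have := ps_mul_ps_neg n j (-φ); rwa [neg_neg] at this
    · rw [star_ps]; exact ps_mul_ps_neg n j φ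
  · rw [star_bs]
    constructor
    · have := bs_mul_bs_neg n j hj (-θ); rwa [neg_neg] at this
    · exact bs_mul_bs_neg n j hj θ

lemma star_gen {n : ℕ} {M : Matrix (Fin n) (Fin n) ℂ} (h : IsGen n M) : IsGen n (star M) := by
  rcases h with ⟨j, φ, rfl⟩ | ⟨j, θ, hj, rfl⟩
  · exact Or.inl ⟨j, -φ, star_ps n j φ⟩
  · exact Or.inr ⟨j, -θ, hj, star_bs n j θ⟩

lemma inv_list {n : ℕ} : ∀ L : List (Matrix (Fin n) (Fin n) ℂ), (∀ M ∈ L, IsGen n M) →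
    ∃ L' : List (Matrix (Fin n) (Fin n) ℂ),
      (∀ M ∈ L', IsGen n M) ∧ L'.prod * L.prod = 1 := by
  intro L
  induction L with
  | nil => exact fun _ => ⟨[], by simp⟩
  | cons M T ih =>
    intro h
    obtain ⟨T', hT', hprod⟩ := ih (fun N hN => h N (List.mem_cons_of_mem _ hN))
    refine ⟨T' ++ [star M], ?_, ?_⟩
    · intro N hN
      rcases List.mem_append.1 hN with hN | hN
      · exact hT' N hN
      · rw [List.mem_singleton.1 hN]
        exact star_gen (h M (List.mem_cons_self))
    · have hsM : star M * M = 1 := ((Unitary.mem_iff).1 (gen_unitary (h M (List.mem_cons_self)))).1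
      rw [List.prod_append, List.prod_singleton, List.prod_cons, mul_assoc,
        ← mul_assoc (star M), hsM, one_mul, hprod]

lemma exp_I_pi_div_two : Complex.exp (Complex.I * ((Real.pi/2 : ℝ) : ℂ)) = Complex.I := by
  rw [mul_comm, Complex.exp_mul_I]
  simp [← Complex.ofReal_cos, ← Complex.ofReal_sin, Real.cos_pi_div_two, Real.sin_pi_div_two]

lemma exp_neg_pi_div_two : Complex.exp (Complex.I * ((-(Real.pi/2) : ℝ) : ℂ)) = -Complex.I := by
  rw [mul_comm, Complex.exp_mul_I]
  simp [← Complex.ofReal_cos, ← Complex.ofReal_sin, Real.cos_pi_div_two, Real.sin_pi_div_two]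

lemma exp_neg_arg_mul (a : ℂ) :
    Complex.exp (Complex.I * ((-(Complex.arg a) : ℝ) : ℂ)) * a = ((‖a‖ : ℝ) : ℂ) := by
  have h := Complex.norm_mul_exp_arg_mul_I a
  have hexp : Complex.exp (Complex.I * ((-(Complex.arg a) : ℝ) : ℂ)) *
      Complex.exp ((Complex.arg a : ℂ) * Complex.I) = 1 := by
    rw [← Complex.exp_add,
      show Complex.I * ((-(Complex.arg a) : ℝ) : ℂ) + (Complex.arg a : ℂ) * Complex.I = 0 from by
        push_cast; ring, Complex.exp_zero]
  linear_combination (-(Complex.exp (Complex.I * ((-(Complex.arg a) : ℝ) : ℂ)))) * h +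
    ((‖a‖ : ℝ) : ℂ) * hexp

lemma exp_pi_div_two_sub_arg_mul (b : ℂ) :
    Complex.exp (Complex.I * ((Real.pi / 2 - Complex.arg b : ℝ) : ℂ)) * b =
      Complex.I * ((‖b‖ : ℝ) : ℂ) := by
  have h := Complex.norm_mul_exp_arg_mul_I b
  have e1 : Complex.exp (Complex.I * ((Real.pi / 2 - Complex.arg b : ℝ) : ℂ)) *
      Complex.exp ((Complex.arg b : ℂ) * Complex.I) =
      Complex.exp (Complex.I * ((Real.pi/2 : ℝ) : ℂ)) := by
    rw [← Complex.exp_add]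
    congr 1
    push_cast; ring
  have e2 := exp_I_pi_div_two
  linear_combination (-(Complex.exp (Complex.I * ((Real.pi / 2 - Complex.arg b : ℝ) : ℂ)))) * h +
    ((‖b‖ : ℝ) : ℂ) * e1 + ((‖b‖ : ℝ) : ℂ) * e2


lemma step_lemma (n j : ℕ) (hj : j + 1 < n) (a b : ℂ) :
    ∃ L : List (Matrix (Fin n) (Fin n) ℂ), (∀ M ∈ L, IsGen n M) ∧
      ∀ v : Fin n → ℂ, v ⟨j, Nat.lt_of_succ_lt hj⟩ = a → v ⟨j+1, hj⟩ = b →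
        (L.prod.mulVec v) ⟨j, Nat.lt_of_succ_lt hj⟩ = 0 ∧
        (L.prod.mulVec v) ⟨j+1, hj⟩ =
          ((Real.sqrt (Complex.normSq a + Complex.normSq b) : ℝ) : ℂ) ∧
        ∀ i : Fin n, (i : ℕ) ≠ j → (i : ℕ) ≠ j + 1 → (L.prod.mulVec v) i = v i := by
  set r : ℝ := Real.sqrt (Complex.normSq a + Complex.normSq b) with hr
  set θ : ℝ := Real.arcsin (‖a‖ / r) with hθ
  set jl : Fin n := ⟨j, Nat.lt_of_succ_lt hj⟩ with hjl
  set jr : Fin n := ⟨j+1, hj⟩ with hjr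
  have hjlr : jl ≠ jr := by simp [hjl, hjr, Fin.ext_iff]
  have hr0 : 0 ≤ r := Real.sqrt_nonneg _
  have hr2 : r ^ 2 = ‖a‖ ^ 2 + ‖b‖ ^ 2 := by
    rw [hr, Real.sq_sqrt (add_nonneg (Complex.normSq_nonneg a) (Complex.normSq_nonneg b)), Complex.sq_norm, Complex.sq_norm]
  have hs : Real.sin θ * r = ‖a‖ := by
    rcases eq_or_lt_of_le hr0 with h0 | hpos
    · have : ‖a‖ ^ 2 + ‖b‖ ^ 2 = 0 := by rw [← hr2, ← h0]; ring
      have ha : ‖a‖ = 0 := by nlinarith [norm_nonneg a, norm_nonneg b]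
      rw [← h0, ha]; ring
    · have hrne : r ≠ 0 := ne_of_gt hpos
      have har : ‖a‖ ≤ r := by
        nlinarith [norm_nonneg a, norm_nonneg b]
      have h0a : (0:ℝ) ≤ ‖a‖ / r := div_nonneg (norm_nonneg a) hr0
      rw [hθ, Real.sin_arcsin (by linarith) (by
        rw [div_le_one hpos]; exact har), div_mul_cancel₀ _ hrne]
  have hc : Real.cos θ * r = ‖b‖ := by
    rcases eq_or_lt_of_le hr0 with h0 | hpos
    · have : ‖a‖ ^ 2 + ‖b‖ ^ 2 = 0 := by rw [← hr2, ← h0]; ring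
      have hb : ‖b‖ = 0 := by nlinarith [norm_nonneg a, norm_nonneg b]
      rw [← h0, hb]; ring
    · have hrne : r ≠ 0 := ne_of_gt hpos
      rw [hθ, Real.cos_arcsin,
        show 1 - (‖a‖ / r) ^ 2 = (‖b‖ / r) ^ 2 from by
          field_simp
          nlinarith [hr2],
        Real.sqrt_sq (div_nonneg (norm_nonneg b) hr0), div_mul_cancel₀ _ hrne]
  have key : (Real.cos θ * ‖a‖ - Real.sin θ * ‖b‖ : ℝ) = 0 := by
    rcases eq_or_lt_of_le hr0 with h0 | hpos
    · have ha : ‖a‖ = 0 := by rw [← hs, ← h0]; ring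
      have hb : ‖b‖ = 0 := by rw [← hc, ← h0]; ring
      rw [ha, hb]; ring
    · have hrne : r ≠ 0 := ne_of_gt hpos
      have h1 : Real.sin θ = ‖a‖ / r := by rw [eq_div_iff hrne]; exact hs
      have h2 : Real.cos θ = ‖b‖ / r := by rw [eq_div_iff hrne]; exact hc
      rw [h1, h2]; field_simp; ring
  have key2 : (Real.sin θ * ‖a‖ + Real.cos θ * ‖b‖ : ℝ) = r := by
    rcases eq_or_lt_of_le hr0 with h0 | hpos
    · have ha : ‖a‖ = 0 := by rw [← hs, ← h0]; ring
      have hb : ‖b‖ = 0 := by rw [← hc, ← h0]; ring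
      rw [ha, hb, ← h0]; ring
    · have hrne : r ≠ 0 := ne_of_gt hpos
      have h1 : Real.sin θ = ‖a‖ / r := by rw [eq_div_iff hrne]; exact hs
      have h2 : Real.cos θ = ‖b‖ / r := by rw [eq_div_iff hrne]; exact hc
      rw [h1, h2]
      field_simp
      nlinarith [hr2]
  have keyC : ((Real.cos θ : ℝ) : ℂ) * ((‖a‖ : ℝ) : ℂ) -
      ((Real.sin θ : ℝ) : ℂ) * ((‖b‖ : ℝ) : ℂ) = 0 := by
    exact_mod_cast congrArg (fun x : ℝ => (x : ℂ)) key
  have key2C : ((Real.sin θ : ℝ) : ℂ) * ((‖a‖ : ℝ) : ℂ) +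
      ((Real.cos θ : ℝ) : ℂ) * ((‖b‖ : ℝ) : ℂ) = ((r : ℝ) : ℂ) := by
    exact_mod_cast congrArg (fun x : ℝ => (x : ℂ)) key2
  refine ⟨[psMatrix n jr (-(Real.pi/2)), bsMatrix n j θ, psMatrix n jl (-(Complex.arg a)),
    psMatrix n jr (Real.pi/2 - Complex.arg b)], ?_, ?_⟩
  · intro M hM
    simp only [List.mem_cons, List.not_mem_nil, or_false] at hM
    rcases hM with rfl | rfl | rfl | rfl
    · exact Or.inl ⟨jr, _, rfl⟩
    · exact Or.inr ⟨j, θ, hj, rfl⟩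
    · exact Or.inl ⟨jl, _, rfl⟩
    · exact Or.inl ⟨jr, _, rfl⟩
  intro v hva hvb
  set w1 : Fin n → ℂ := (psMatrix n jr (Real.pi/2 - Complex.arg b)).mulVec v with hw1
  set w2 : Fin n → ℂ := (psMatrix n jl (-(Complex.arg a))).mulVec w1 with hw2
  set w3 : Fin n → ℂ := (bsMatrix n j θ).mulVec w2 with hw3
  set w4 : Fin n → ℂ := (psMatrix n jr (-(Real.pi/2))).mulVec w3 with hw4
  have hprod : (List.prod [psMatrix n jr (-(Real.pi/2)), bsMatrix n j θ,
      psMatrix n jl (-(Complex.arg a)),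
      psMatrix n jr (Real.pi/2 - Complex.arg b)]).mulVec v = w4 := by
    simp only [List.prod_cons, List.prod_nil, mul_one, ← Matrix.mulVec_mulVec,
      hw4, hw3, hw2, hw1]
  have hw1l : w1 jl = a := by rw [hw1, ps_mulVec, if_neg hjlr, one_mul, hva]
  have hw1r : w1 jr = Complex.I * ((‖b‖ : ℝ) : ℂ) := by
    rw [hw1, ps_mulVec, if_pos rfl, hvb]
    exact exp_pi_div_two_sub_arg_mul b
  have hw1o : ∀ i, i ≠ jr → w1 i = v i := by
    intro i hi; rw [hw1, ps_mulVec, if_neg hi, one_mul]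
  have hw2l : w2 jl = ((‖a‖ : ℝ) : ℂ) := by
    rw [hw2, ps_mulVec, if_pos rfl, hw1l]
    exact exp_neg_arg_mul a
  have hw2r : w2 jr = Complex.I * ((‖b‖ : ℝ) : ℂ) := by
    rw [hw2, ps_mulVec, if_neg (Ne.symm hjlr), one_mul, hw1r]
  have hw2o : ∀ i, i ≠ jl → i ≠ jr → w2 i = v i := by
    intro i hi hi'; rw [hw2, ps_mulVec, if_neg hi, one_mul, hw1o i hi']
  have hw3l : w3 jl = 0 := by
    rw [hw3, bs_mulVec n j hj, if_pos rfl]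
    show (Real.cos θ : ℂ) * w2 jl + Complex.I * (Real.sin θ : ℂ) * w2 jr = 0
    rw [hw2l, hw2r]
    linear_combination keyC + (((Real.sin θ : ℝ) : ℂ) * ((‖b‖ : ℝ) : ℂ)) * Complex.I_mul_I
  have hw3r : w3 jr = Complex.I * ((r : ℝ) : ℂ) := by
    rw [hw3, bs_mulVec n j hj, if_neg (by simp [hjr]), if_pos rfl]
    show Complex.I * (Real.sin θ : ℂ) * w2 jl + (Real.cos θ : ℂ) * w2 jr = _
    rw [hw2l, hw2r]
    linear_combination Complex.I * key2C
  have hw3o : ∀ i : Fin n, (i : ℕ) ≠ j → (i : ℕ) ≠ j + 1 → w3 i = w2 i := by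
    intro i hi hi'
    rw [hw3, bs_mulVec n j hj, if_neg hi, if_neg hi']
  have hw4l : w4 jl = 0 := by
    rw [hw4, ps_mulVec, if_neg hjlr, one_mul, hw3l]
  have hw4r : w4 jr = ((r : ℝ) : ℂ) := by
    rw [hw4, ps_mulVec, if_pos rfl, hw3r, exp_neg_pi_div_two]
    linear_combination (-((r : ℝ) : ℂ)) * Complex.I_mul_I
  have hw4o : ∀ i : Fin n, (i : ℕ) ≠ j → (i : ℕ) ≠ j + 1 → w4 i = v i := by
    intro i hi hi'
    have h1 : i ≠ jl := fun h => hi (by rw [h])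
    have h2 : i ≠ jr := fun h => hi' (by rw [h])
    rw [hw4, ps_mulVec, if_neg h2, one_mul, hw3o i hi hi', hw2o i h1 h2]
  rw [hprod]
  exact ⟨hw4l, hw4r, hw4o⟩

lemma clear_lemma (n : ℕ) (c : Fin (n+1) → ℂ) :
    ∀ m : ℕ, m ≤ n → ∃ L : List (Matrix (Fin (n+1)) (Fin (n+1)) ℂ),
      (∀ M ∈ L, IsGen (n+1) M) ∧
      ∀ i : Fin (n+1),
        (L.prod.mulVec c) i =
          if (i : ℕ) < m then 0
          else if (i : ℕ) = m then
            ((Real.sqrt (∑ k ∈ Finset.univ.filter (fun k : Fin (n+1) => (k : ℕ) ≤ m),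
              Complex.normSq (c k)) : ℝ) : ℂ)
          else c i := by
  intro m
  induction m with
  | zero =>
    intro _
    refine ⟨[psMatrix (n+1) ⟨0, Nat.succ_pos n⟩ (-(Complex.arg (c ⟨0, Nat.succ_pos n⟩)))],
      fun M hM => ?_, fun i => ?_⟩
    · rw [List.mem_singleton.1 hM]; exact Or.inl ⟨_, _, rfl⟩
    · rw [List.prod_singleton, ps_mulVec]
      have hfil : Finset.univ.filter (fun k : Fin (n+1) => (k : ℕ) ≤ 0) =
          {(⟨0, Nat.succ_pos n⟩ : Fin (n+1))} := by
        ext k; simp only [Finset.mem_filter, Finset.mem_univ, true_and, Finset.mem_singleton, Fin.ext_iff]; omega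
      rw [hfil, Finset.sum_singleton]
      by_cases hi : i = ⟨0, Nat.succ_pos n⟩
      · subst hi
        rw [if_pos rfl, if_neg (by simp), if_pos rfl, exp_neg_arg_mul]
        rw [show Real.sqrt (Complex.normSq (c ⟨0, Nat.succ_pos n⟩)) =
          ‖c ⟨0, Nat.succ_pos n⟩‖ from (Complex.norm_def _).symm]
      · have hi' : (i : ℕ) ≠ 0 := fun h => hi (Fin.ext h)
        rw [if_neg hi, one_mul, if_neg (by omega), if_neg hi']
  | succ m ih =>
    intro hm1
    obtain ⟨L, hL, hw⟩ := ih (Nat.le_of_succ_le hm1)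
    have hmlt : m + 1 < n + 1 := Nat.succ_lt_succ hm1
    set s : ℝ := ∑ k ∈ Finset.univ.filter (fun k : Fin (n+1) => (k : ℕ) ≤ m),
      Complex.normSq (c k) with hsdef
    have hs0 : 0 ≤ s := Finset.sum_nonneg fun k _ => Complex.normSq_nonneg _
    set a : ℂ := ((Real.sqrt s : ℝ) : ℂ) with hadef
    set b : ℂ := c ⟨m+1, hmlt⟩ with hbdef
    obtain ⟨L2, hL2, hstep⟩ := step_lemma (n+1) m hmlt a b
    set v : Fin (n+1) → ℂ := L.prod.mulVec c with hvdef
    have hva : v ⟨m, Nat.lt_of_succ_lt hmlt⟩ = a := by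
      rw [hw]; simp
    have hvb : v ⟨m+1, hmlt⟩ = b := by
      rw [hw]; simp [hbdef]
    obtain ⟨hz, hval, hoth⟩ := hstep v hva hvb
    have hsum : ∑ k ∈ Finset.univ.filter (fun k : Fin (n+1) => (k : ℕ) ≤ m + 1),
        Complex.normSq (c k) = Complex.normSq a + Complex.normSq b := by
      rw [show Finset.univ.filter (fun k : Fin (n+1) => (k : ℕ) ≤ m + 1) =
          insert (⟨m+1, hmlt⟩ : Fin (n+1))
            (Finset.univ.filter (fun k : Fin (n+1) => (k : ℕ) ≤ m)) from by
        ext k; simp [Fin.ext_iff]; omega, Finset.sum_insert (by simp)]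
      rw [hadef, hbdef, Complex.normSq_ofReal, Real.mul_self_sqrt hs0, ← hsdef]
      ring
    refine ⟨L2 ++ L, fun M hM => ?_, fun i => ?_⟩
    · rcases List.mem_append.1 hM with h | h
      · exact hL2 M h
      · exact hL M h
    · have hmv : (L2 ++ L).prod.mulVec c = L2.prod.mulVec v := by
        rw [List.prod_append, ← Matrix.mulVec_mulVec, hvdef]
      rw [hmv]
      rcases lt_trichotomy (i : ℕ) m with h | h | h
      · rw [hoth i (by omega) (by omega), hw, if_pos h, if_pos (by omega)]
      · have : i = ⟨m, Nat.lt_of_succ_lt hmlt⟩ := Fin.ext h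
        rw [this, hz, if_pos (by omega)]
      · rcases Nat.eq_or_lt_of_le h with h1 | h1
        · have : i = ⟨m+1, hmlt⟩ := Fin.ext h1.symm
          rw [this, hval, if_neg (by omega), if_pos (by omega), hsum]
        · rw [hoth i (by omega) (by omega), hw,
            if_neg (by omega), if_neg (by omega), if_neg (by omega), if_neg (by omega)]

def emb (n : ℕ) (M : Matrix (Fin n) (Fin n) ℂ) : Matrix (Fin (n+1)) (Fin (n+1)) ℂ :=
  fun i j =>
    if hi : (i : ℕ) < n then
      (if hj : (j : ℕ) < n then M ⟨i, hi⟩ ⟨j, hj⟩ else 0)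
    else (if (j : ℕ) < n then 0 else 1)

lemma emb_one (n : ℕ) : emb n 1 = 1 := by
  ext i j
  simp only [emb, Matrix.one_apply]
  have hi := i.isLt
  have hj := j.isLt
  split_ifs with h1 h2 h3 h4 h5 <;>
    simp_all [Fin.ext_iff] <;> omega

lemma emb_mul (n : ℕ) (M N : Matrix (Fin n) (Fin n) ℂ) :
    emb n (M * N) = emb n M * emb n N := by
  ext i j
  rw [Matrix.mul_apply, Fin.sum_univ_castSucc]
  by_cases hi : (i : ℕ) < n
  · by_cases hj : (j : ℕ) < n
    · have : emb n M i (Fin.last n) * emb n N (Fin.last n) j = 0 := by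
        simp [emb, hi, hj]
      rw [this, add_zero,
        show emb n (M * N) i j = (M * N) ⟨i, hi⟩ ⟨j, hj⟩ from by simp [emb, hi, hj],
        Matrix.mul_apply]
      apply Finset.sum_congr rfl
      intro k _
      simp [emb, hi, hj, k.isLt]
    · have h0 : ∀ k : Fin n, emb n M i k.castSucc * emb n N k.castSucc j = 0 := by
        intro k; simp [emb, hi, hj, k.isLt]
      simp only [h0, Finset.sum_const_zero, zero_add]
      simp [emb, hi, hj]
  · have h0 : ∀ k : Fin n, emb n M i k.castSucc * emb n N k.castSucc j = 0 := by
      intro k; simp [emb, hi, k.isLt]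
    simp only [h0, Finset.sum_const_zero, zero_add]
    by_cases hj : (j : ℕ) < n <;> simp [emb, hi, hj]

lemma emb_prod (n : ℕ) (L : List (Matrix (Fin n) (Fin n) ℂ)) :
    (L.map (emb n)).prod = emb n L.prod := by
  induction L with
  | nil => simp [emb_one]
  | cons M T ih => simp [List.prod_cons, ih, emb_mul]

lemma emb_ps (n : ℕ) (j : Fin n) (φ : ℝ) :
    emb n (psMatrix n j φ) = psMatrix (n+1) ⟨(j : ℕ), Nat.lt_succ_of_lt j.isLt⟩ φ := by
  ext i i'
  simp only [emb, psMatrix, Matrix.diagonal_apply]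
  by_cases hi : (i : ℕ) < n
  · by_cases hi' : (i' : ℕ) < n
    · simp only [dif_pos hi, dif_pos hi']
      have e1 : ((⟨i, hi⟩ : Fin n) = ⟨i', hi'⟩) ↔ i = i' := by simp [Fin.ext_iff]
      have e2 : ((⟨i, hi⟩ : Fin n) = j) ↔ i = ⟨(j : ℕ), Nat.lt_succ_of_lt j.isLt⟩ := by
        simp [Fin.ext_iff]
      rw [show (if (⟨i,hi⟩ : Fin n) = ⟨i',hi'⟩ then (if (⟨i,hi⟩ : Fin n) = j then
        Complex.exp (Complex.I * φ) else 1) else 0) = _ from rfl]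
      split_ifs with h1 h2 h3 h4 h5 <;> simp_all [Fin.ext_iff] <;> omega
    · simp only [dif_pos hi, dif_neg hi']
      rw [if_neg (by simp [Fin.ext_iff]; omega)]
  · simp only [dif_neg hi]
    by_cases hi' : (i' : ℕ) < n
    · rw [if_pos hi', if_neg (by simp [Fin.ext_iff]; omega)]
    · have hii : (i : ℕ) = n := by omega
      have hii' : (i' : ℕ) = n := by omega
      rw [if_neg (by omega), if_pos (by simp [Fin.ext_iff]; omega),
        if_neg (by simp [Fin.ext_iff]; omega)]

lemma emb_bs (n j : ℕ) (hj : j + 1 < n) (θ : ℝ) :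
    emb n (bsMatrix n j θ) = bsMatrix (n+1) j θ := by
  ext i i'
  simp only [emb, bsMatrix]
  by_cases hi : (i : ℕ) < n
  · by_cases hi' : (i' : ℕ) < n
    · simp only [dif_pos hi, dif_pos hi']
      have : ((⟨i, hi⟩ : Fin n) = ⟨i', hi'⟩) ↔ i = i' := by simp [Fin.ext_iff]
      simp only [this]
    · simp only [dif_pos hi, dif_neg hi']
      have h1 : ¬(((i:ℕ)) = j ∧ (i':ℕ) = j ∨ ((i:ℕ)) = j + 1 ∧ (i':ℕ) = j + 1) := by omega
      have h2 : ¬(((i:ℕ)) = j ∧ (i':ℕ) = j + 1 ∨ ((i:ℕ)) = j + 1 ∧ (i':ℕ) = j) := by omega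
      rw [if_neg h1, if_neg h2, if_neg (by simp [Fin.ext_iff]; omega)]
  · by_cases hi' : (i' : ℕ) < n
    · simp only [dif_neg hi]
      have h1 : ¬(((i:ℕ)) = j ∧ (i':ℕ) = j ∨ ((i:ℕ)) = j + 1 ∧ (i':ℕ) = j + 1) := by omega
      have h2 : ¬(((i:ℕ)) = j ∧ (i':ℕ) = j + 1 ∨ ((i:ℕ)) = j + 1 ∧ (i':ℕ) = j) := by omega
      rw [if_pos hi', if_neg h1, if_neg h2, if_neg (by simp [Fin.ext_iff]; omega)]
    · simp only [dif_neg hi]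
      have h1 : ¬(((i:ℕ)) = j ∧ (i':ℕ) = j ∨ ((i:ℕ)) = j + 1 ∧ (i':ℕ) = j + 1) := by omega
      have h2 : ¬(((i:ℕ)) = j ∧ (i':ℕ) = j + 1 ∨ ((i:ℕ)) = j + 1 ∧ (i':ℕ) = j) := by omega
      rw [if_neg (by omega), if_neg h1, if_neg h2, if_pos (by simp [Fin.ext_iff]; omega)]

lemma emb_gen {n : ℕ} {M : Matrix (Fin n) (Fin n) ℂ} (h : IsGen n M) : IsGen (n+1) (emb n M) := by
  rcases h with ⟨j, φ, rfl⟩ | ⟨j, θ, hj, rfl⟩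
  · exact Or.inl ⟨_, φ, emb_ps n j φ⟩
  · exact Or.inr ⟨j, θ, Nat.lt_succ_of_lt hj, emb_bs n j hj θ⟩

lemma star_mul_self_c (z : ℂ) : star z * z = (Complex.normSq z : ℂ) := by
  rw [mul_comm]; exact Complex.mul_conj z

lemma mul_star_self_c (z : ℂ) : z * star z = (Complex.normSq z : ℂ) := Complex.mul_conj z

lemma main_aux : ∀ n : ℕ, ∀ U : Matrix (Fin (n+1)) (Fin (n+1)) ℂ,
    U ∈ unitary (Matrix (Fin (n+1)) (Fin (n+1)) ℂ) →
    ∃ L : List (Matrix (Fin (n+1)) (Fin (n+1)) ℂ),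
      (∀ M ∈ L, IsGen (n+1) M) ∧ U = L.prod := by
  intro n
  induction n with
  | zero =>
    intro U hU
    have h1 : (star U * U) 0 0 = (1 : Matrix (Fin 1) (Fin 1) ℂ) 0 0 := by
      rw [((Unitary.mem_iff).1 hU).1]
    rw [Matrix.mul_apply, Fin.sum_univ_one, Matrix.one_apply_eq, Matrix.star_apply] at h1
    have habs : (Complex.normSq (U 0 0) : ℂ) = 1 := by
      rw [← h1, star_mul_self_c]
    have habs' : ‖U 0 0‖ = 1 := by
      have : Complex.normSq (U 0 0) = 1 := by exact_mod_cast habs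
      rw [Complex.norm_def, this, Real.sqrt_one]
    refine ⟨[psMatrix 1 0 (Complex.arg (U 0 0))], fun M hM => ?_, ?_⟩
    · rw [List.mem_singleton.1 hM]; exact Or.inl ⟨0, _, rfl⟩
    · rw [List.prod_singleton]
      ext i j
      have hi : i = 0 := Fin.ext (by omega)
      have hj : j = 0 := Fin.ext (by omega)
      subst hi; subst hj
      simp only [psMatrix, Matrix.diagonal_apply_eq, if_pos rfl]
      rw [mul_comm]
      have := Complex.norm_mul_exp_arg_mul_I (U 0 0)
      rw [habs'] at this
      simpa using this.symm
  | succ m ih =>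
    intro U hU
    set lst : Fin (m+2) := Fin.last (m+1) with hlst
    set c : Fin (m+2) → ℂ := fun i => U i lst with hc
    -- total norm of last column is 1
    have hcol1 : ∑ k : Fin (m+2), Complex.normSq (c k) = 1 := by
      have h1 : (star U * U) lst lst = (1 : Matrix (Fin (m+2)) (Fin (m+2)) ℂ) lst lst := by
        rw [((Unitary.mem_iff).1 hU).1]
      rw [Matrix.mul_apply, Matrix.one_apply_eq] at h1
      have h2 : ∑ k : Fin (m+2), ((Complex.normSq (c k) : ℝ) : ℂ) = 1 := by
        rw [← h1]
        apply Finset.sum_congr rfl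
        intro k _
        rw [Matrix.star_apply, star_mul_self_c]
      rw [← Complex.ofReal_sum] at h2
      exact_mod_cast h2
    obtain ⟨L, hL, hw⟩ := clear_lemma (m+1) c (m+1) (le_refl _)
    set V : Matrix (Fin (m+2)) (Fin (m+2)) ℂ := L.prod with hV
    set A : Matrix (Fin (m+2)) (Fin (m+2)) ℂ := V * U with hA
    have hfilall : Finset.univ.filter (fun k : Fin (m+2) => (k : ℕ) ≤ m + 1) = Finset.univ := by
      ext k; simp [Nat.lt_succ_iff.1 k.isLt]
    have hAcol : ∀ i : Fin (m+2), A i lst = if i = lst then 1 else 0 := by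
      intro i
      have : A i lst = V.mulVec c i := by
        rw [hA, Matrix.mul_apply, Matrix.mulVec, dotProduct]
      rw [this, hV, hw i]
      by_cases h : i = lst
      · rw [if_pos h, if_neg (by rw [h]; simp [hlst]), if_pos (by rw [h]; simp [hlst]),
          hfilall, hcol1, Real.sqrt_one, Complex.ofReal_one]
      · have hilt : (i : ℕ) < m + 1 := by
          rcases Nat.lt_succ_iff_lt_or_eq.1 i.isLt with h' | h'
          · exact h'
          · exact absurd (Fin.ext h') (by simpa [hlst] using h)
        rw [if_pos hilt, if_neg h]
    have hVuni : V ∈ unitary (Matrix (Fin (m+2)) (Fin (m+2)) ℂ) := by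
      rw [hV]
      exact Submonoid.list_prod_mem _ (fun M hM => gen_unitary (hL M hM))
    have hAuni : A ∈ unitary (Matrix (Fin (m+2)) (Fin (m+2)) ℂ) := mul_mem hVuni hU
    have hArow : ∀ j' : Fin (m+2), j' ≠ lst → A lst j' = 0 := by
      have h1 : (A * star A) lst lst = (1 : Matrix (Fin (m+2)) (Fin (m+2)) ℂ) lst lst := by
        rw [((Unitary.mem_iff).1 hAuni).2]
      rw [Matrix.mul_apply, Matrix.one_apply_eq] at h1
      have h2 : ∑ k : Fin (m+2), ((Complex.normSq (A lst k) : ℝ) : ℂ) = 1 := by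
        rw [← h1]
        apply Finset.sum_congr rfl
        intro k _
        rw [Matrix.star_apply, mul_star_self_c]
      rw [← Complex.ofReal_sum] at h2
      have h3 : ∑ k : Fin (m+2), Complex.normSq (A lst k) = 1 := by exact_mod_cast h2
      rw [Fin.sum_univ_castSucc] at h3
      have h4 : Complex.normSq (A lst (Fin.last (m+1))) = 1 := by
        rw [← hlst, hAcol lst, if_pos rfl]; simp
      rw [← hlst, h4] at h3
      have h5 : ∑ k : Fin (m+1), Complex.normSq (A lst k.castSucc) = 0 := by linarith
      have h6 : ∀ k : Fin (m+1), Complex.normSq (A lst k.castSucc) = 0 := by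
        intro k
        have := (Finset.sum_eq_zero_iff_of_nonneg
          (fun k _ => Complex.normSq_nonneg (A lst k.castSucc))).1 h5
        exact this k (Finset.mem_univ k)
      intro j' hj'
      have hjlt : (j' : ℕ) < m + 1 := by
        rcases Nat.lt_succ_iff_lt_or_eq.1 j'.isLt with h' | h'
        · exact h'
        · exact absurd (Fin.ext h') (by simpa [hlst] using hj')
      have : j' = (⟨(j' : ℕ), hjlt⟩ : Fin (m+1)).castSucc := by simp [Fin.ext_iff]
      rw [this]
      exact Complex.normSq_eq_zero.1 (h6 _)
    set U' : Matrix (Fin (m+1)) (Fin (m+1)) ℂ := fun p q => A p.castSucc q.castSucc with hU'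
    have hcastne : ∀ p : Fin (m+1), p.castSucc ≠ lst := by
      intro p
      rw [hlst]
      exact Fin.ne_last_of_lt (Fin.castSucc_lt_last p)
    have hU'uni : U' ∈ unitary (Matrix (Fin (m+1)) (Fin (m+1)) ℂ) := by
      rw [Unitary.mem_iff]
      constructor
      · ext p q
        have h1 : (star A * A) p.castSucc q.castSucc =
            (1 : Matrix (Fin (m+2)) (Fin (m+2)) ℂ) p.castSucc q.castSucc := by
          rw [((Unitary.mem_iff).1 hAuni).1]
        rw [Matrix.mul_apply, Fin.sum_univ_castSucc, Matrix.star_apply,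
          hArow p.castSucc (hcastne p), star_zero, zero_mul, add_zero] at h1
        rw [Matrix.mul_apply]
        calc ∑ k : Fin (m+1), (star U') p k * U' k q
            = ∑ k : Fin (m+1), star (A k.castSucc p.castSucc) * A k.castSucc q.castSucc := by
              apply Finset.sum_congr rfl; intro k _; rw [Matrix.star_apply, hU']
          _ = (1 : Matrix (Fin (m+2)) (Fin (m+2)) ℂ) p.castSucc q.castSucc := by
              rw [← h1]; apply Finset.sum_congr rfl; intro k _; rw [Matrix.star_apply]
          _ = (1 : Matrix (Fin (m+1)) (Fin (m+1)) ℂ) p q := by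
              simp [Matrix.one_apply, Fin.castSucc_inj]
      · ext p q
        have h1 : (A * star A) p.castSucc q.castSucc =
            (1 : Matrix (Fin (m+2)) (Fin (m+2)) ℂ) p.castSucc q.castSucc := by
          rw [((Unitary.mem_iff).1 hAuni).2]
        have hAl : A p.castSucc (Fin.last (m+1)) = 0 := by
          rw [← hlst, hAcol, if_neg (hcastne p)]
        rw [Matrix.mul_apply, Fin.sum_univ_castSucc, hAl, zero_mul, add_zero] at h1
        rw [Matrix.mul_apply]
        calc ∑ k : Fin (m+1), U' p k * (star U') k q
            = ∑ k : Fin (m+1), A p.castSucc k.castSucc * star (A q.castSucc k.castSucc) := by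
              apply Finset.sum_congr rfl; intro k _; rw [Matrix.star_apply, hU']
          _ = (1 : Matrix (Fin (m+2)) (Fin (m+2)) ℂ) p.castSucc q.castSucc := by
              rw [← h1]; apply Finset.sum_congr rfl; intro k _; rw [Matrix.star_apply]
          _ = (1 : Matrix (Fin (m+1)) (Fin (m+1)) ℂ) p q := by
              simp [Matrix.one_apply, Fin.castSucc_inj]
    obtain ⟨L'', hL'', hU''⟩ := ih U' hU'uni
    have hAemb : A = emb (m+1) U' := by
      ext i j
      by_cases hi : (i : ℕ) < m + 1
      · by_cases hj : (j : ℕ) < m + 1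
        · have h : emb (m+1) U' i j = U' ⟨i, hi⟩ ⟨j, hj⟩ := by simp [emb, hi, hj]
          rw [h, hU']
          congr 1 <;> exact Fin.ext (by simp)
        · have hjl : j = lst := Fin.ext (by
            have := j.isLt; simp only [hlst, Fin.val_last]; omega)
          have h : emb (m+1) U' i j = 0 := by simp [emb, hi, hj]
          rw [h, hjl, hAcol,
            if_neg (fun hh => by rw [hh, hlst] at hi; simp at hi)]
      · have hil : i = lst := Fin.ext (by
          have := i.isLt; simp only [hlst, Fin.val_last]; omega)
        by_cases hj : (j : ℕ) < m + 1
        · have h : emb (m+1) U' i j = 0 := by simp [emb, hi, hj]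
          rw [h, hil]
          exact hArow j (fun hh => by rw [hh, hlst] at hj; simp at hj)
        · have hjl : j = lst := Fin.ext (by
            have := j.isLt; simp only [hlst, Fin.val_last]; omega)
          have h : emb (m+1) U' i j = 1 := by simp [emb, hi, hj]
          rw [h, hil, hjl, hAcol, if_pos rfl]
    obtain ⟨L', hL', hinv⟩ := inv_list L hL
    refine ⟨L' ++ L''.map (emb (m+1)), ?_, ?_⟩
    · intro M hM
      rcases List.mem_append.1 hM with h | h
      · exact hL' M h
      · obtain ⟨N, hN, rfl⟩ := List.mem_map.1 h
        exact emb_gen (hL'' N hN)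
    · rw [List.prod_append, emb_prod, ← hU'', ← hAemb, hA, hV, ← mul_assoc, hinv, one_mul]

theorem lopp_universality (n : ℕ) (hn : 1 ≤ n) (U : Matrix.unitaryGroup (Fin n) ℂ) :
    ∃ L : List (Matrix (Fin n) (Fin n) ℂ),
      (∀ M ∈ L, (∃ (j : Fin n) (φ : ℝ), M = psMatrix n j φ) ∨
        (∃ (j : ℕ) (θ : ℝ), j + 1 < n ∧ M = bsMatrix n j θ)) ∧
      (U : Matrix (Fin n) (Fin n) ℂ) = L.prod := by
  cases n with
  | zero => omega
  | succ m =>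
    obtain ⟨L, hL, hU⟩ := main_aux m U.1 U.2
    exact ⟨L, fun M hM => hL M hM, hU⟩
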